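/- Let Q₀ be a finite index set with distinct elements a, b, c, d, let C be a symmetric integer matrix on Q₀ satisfying C_{cd} = C_{ab} + 1 and C_{a i} + C_{b i} = C_{c i} + C_{d i} − δ_{c i} − δ_{d i} for all i ∈ Q₀, and let C′ be obtained from C by exchanging the entries C_{ab} ↔ C_{cd} (and symmetrically C_{ba} ↔ C_{dc}). Let λ : Q₀ → M be a map into a commutative monoid of monomials with λ_a λ_b = λ_c λ_d. Then for every N ≥ 0, ∑ over dimension vectors d : Q₀ → ℕ with ∑_i d_i = N of (−q)^{∑_{i,j} C_{ij} d_i d_j} · ∏_i λ_i^{d_i} / (q²;q²)_{d_i} equals the same sum with C replaced by C′. Consequently the motivic generating series of Q and Q′ agree after the substitution x_i = x λ_i. -/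

import Mathlib

open Finset

section KQ
variable {K : Type*} [Field K] (q : K)

noncomputable def pqKQ (k : ℕ) : K := ∏ s ∈ Finset.range k, (1 - q ^ (2 * (s + 1)))

lemma pqKQ_zero : pqKQ q 0 = 1 := rfl

lemma pqKQ_succ (k : ℕ) : pqKQ q (k + 1) = pqKQ q k * (1 - q ^ (2 * (k + 1))) :=
  Finset.prod_range_succ _ _

lemma pqKQ_ne_zero (hpoch : ∀ s : ℕ, 1 ≤ s → (1 : K) - q ^ (2 * s) ≠ 0) (k : ℕ) :
    pqKQ q k ≠ 0 :=
  Finset.prod_ne_zero_iff.mpr fun s _ => hpoch (s + 1) (Nat.le_add_left _ _)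

noncomputable def gbKQ : ℕ → ℕ → K
  | 0, 0 => 1
  | 0, _ + 1 => 0
  | _ + 1, 0 => 1
  | m + 1, γ + 1 => gbKQ m (γ + 1) + q ^ (2 * (m - γ)) * gbKQ m γ

lemma gbKQ_zero_right : ∀ n : ℕ, gbKQ q n 0 = 1
  | 0 => rfl
  | _ + 1 => rfl

lemma gbKQ_succ (m γ : ℕ) :
    gbKQ q (m + 1) (γ + 1) = gbKQ q m (γ + 1) + q ^ (2 * (m - γ)) * gbKQ q m γ := rfl

lemma gbKQ_eq_zero (m : ℕ) : ∀ γ : ℕ, m < γ → gbKQ q m γ = 0 := by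
  induction m with
  | zero => intro γ h; match γ, h with | γ + 1, _ => rfl
  | succ m ih =>
      intro γ h
      match γ, h with
      | γ + 1, h =>
        rw [gbKQ_succ, ih (γ + 1) (by omega), ih γ (by omega)]
        ring

lemma gbKQ_diag (m : ℕ) : gbKQ q m m = 1 := by
  induction m with
  | zero => rfl
  | succ m ih =>
      rw [gbKQ_succ, gbKQ_eq_zero q m (m + 1) (by omega), ih]
      simp

lemma gbKQ_mul (m : ℕ) : ∀ γ : ℕ, γ ≤ m →
    gbKQ q m γ * (pqKQ q (m - γ) * pqKQ q γ) = pqKQ q m := by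
  induction m with
  | zero =>
      intro γ h
      match γ, h with
      | 0, _ => simp [gbKQ, pqKQ_zero]
  | succ m ih =>
      intro γ h
      match γ with
      | 0 => simp [gbKQ_zero_right, pqKQ_zero]
      | γ + 1 =>
        rcases Nat.lt_or_ge γ m with hlt | hge
        · have IH1 := ih (γ + 1) (by omega)
          have IH2 := ih γ (by omega)
          have e1 : m + 1 - (γ + 1) = m - γ := by omega
          have e2 : m - (γ + 1) = (m - γ) - 1 := by omega
          have hAB : q ^ (2 * (m - γ)) * q ^ (2 * (γ + 1)) = q ^ (2 * (m + 1)) := by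
            rw [← pow_add]; congr 1; omega
          have hsucc : pqKQ q (γ + 1) = pqKQ q γ * (1 - q ^ (2 * (γ + 1))) := pqKQ_succ q γ
          have hm : pqKQ q (m + 1) = pqKQ q m * (1 - q ^ (2 * (m + 1))) := pqKQ_succ q m
          have hmγ : pqKQ q (m - γ) = pqKQ q ((m - γ) - 1) * (1 - q ^ (2 * (m - γ))) := by
            rw [show m - γ = ((m - γ) - 1) + 1 by omega, pqKQ_succ]
            rw [show (m - γ) - 1 + 1 = m - γ by omega]
          rw [e2] at IH1
          rw [hmγ] at IH2
          rw [gbKQ_succ, e1, hmγ, hsucc, hm]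
          rw [hsucc] at IH1
          linear_combination (1 - q ^ (2 * (m - γ))) * IH1 +
            q ^ (2 * (m - γ)) * (1 - q ^ (2 * (γ + 1))) * IH2 -
            pqKQ q m * hAB
        · have hγ : γ = m := by omega
          subst hγ
          rw [gbKQ_succ, gbKQ_eq_zero q γ (γ + 1) (by omega), gbKQ_diag]
          simp [pqKQ_zero]

lemma gbKQ_bracket (hpoch : ∀ s : ℕ, 1 ≤ s → (1 : K) - q ^ (2 * s) ≠ 0) (n γ : ℕ) :
    gbKQ q n γ * pqKQ q γ * (1 - q ^ (2 * (n - γ))) = gbKQ q n (γ + 1) * pqKQ q (γ + 1) := by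
  rcases Nat.lt_or_ge γ n with hlt | hge
  · apply mul_right_cancel₀ (pqKQ_ne_zero q hpoch (n - γ - 1))
    have h1 : gbKQ q n γ * (pqKQ q (n - γ) * pqKQ q γ) = pqKQ q n := gbKQ_mul q n γ (by omega)
    have h2 : gbKQ q n (γ + 1) * (pqKQ q (n - (γ + 1)) * pqKQ q (γ + 1)) = pqKQ q n :=
      gbKQ_mul q n (γ + 1) (by omega)
    have hmγ : pqKQ q (n - γ) = pqKQ q ((n - γ) - 1) * (1 - q ^ (2 * (n - γ))) := by
      rw [show n - γ = ((n - γ) - 1) + 1 by omega, pqKQ_succ]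
      rw [show (n - γ) - 1 + 1 = n - γ by omega]
    rw [hmγ] at h1
    rw [show n - (γ + 1) = (n - γ) - 1 by omega] at h2
    linear_combination h1 - h2
  · rcases Nat.lt_or_ge n γ with hlt' | hge'
    · rw [gbKQ_eq_zero q n γ hlt', gbKQ_eq_zero q n (γ + 1) (by omega)]
      ring
    · have : γ = n := by omega
      subst this
      rw [Nat.sub_self, gbKQ_eq_zero q γ (γ + 1) (by omega)]
      simp

lemma KEY (hpoch : ∀ s : ℕ, 1 ≤ s → (1 : K) - q ^ (2 * s) ≠ 0) (m n : ℕ) :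
    ∑ γ ∈ Finset.range (m + 1),
      q ^ (2 * (m - γ) * (n - γ)) * (gbKQ q m γ * gbKQ q n γ * pqKQ q γ) = 1 := by
  induction m with
  | zero => simp [gbKQ_zero_right, pqKQ_zero, gbKQ]
  | succ m ih =>
      set t : ℕ → K := fun γ =>
        q ^ (2 * (m - γ) * (n - γ)) * (gbKQ q m γ * gbKQ q n γ * pqKQ q γ) with ht
      set w : ℕ → K := fun γ => q ^ (2 * (n - γ)) * t γ with hw
      rw [Finset.sum_range_succ']
      have hstep : ∀ γ ∈ Finset.range (m + 1),
          q ^ (2 * (m + 1 - (γ + 1)) * (n - (γ + 1))) *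
            (gbKQ q (m + 1) (γ + 1) * gbKQ q n (γ + 1) * pqKQ q (γ + 1))
          = t γ + (w (γ + 1) - w γ) := by
        intro γ hγ
        rw [Finset.mem_range] at hγ
        rw [gbKQ_succ]
        rw [show m + 1 - (γ + 1) = m - γ by omega]
        have hbr := gbKQ_bracket q hpoch n γ
        have hu : q ^ (2 * (m - γ) * (n - (γ + 1))) *
            (gbKQ q m (γ + 1) * gbKQ q n (γ + 1) * pqKQ q (γ + 1)) = w (γ + 1) := by
          rcases Nat.lt_or_ge γ m with h | h
          · have hE : 2 * (m - γ) * (n - (γ + 1)) =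
                2 * (n - (γ + 1)) + 2 * (m - (γ + 1)) * (n - (γ + 1)) := by
              rw [show m - γ = (m - (γ + 1)) + 1 by omega]; ring
            simp only [hw, ht]
            rw [hE, pow_add]; ring
          · have : γ = m := by omega
            subst this
            simp [hw, ht, gbKQ_eq_zero q γ (γ + 1) (by omega)]
        have hv : q ^ (2 * (m - γ) * (n - (γ + 1))) * (q ^ (2 * (m - γ)) * gbKQ q m γ *
            (gbKQ q n (γ + 1) * pqKQ q (γ + 1))) = t γ - w γ := by
          rw [← hbr]
          rcases Nat.lt_or_ge γ n with h | h
          · have hexp : 2 * (m - γ) * (n - (γ + 1)) + 2 * (m - γ) = 2 * (m - γ) * (n - γ) := by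
              rw [show n - γ = (n - (γ + 1)) + 1 by omega]; ring
            simp only [hw, ht]
            rw [← hexp, pow_add]; ring
          · have h0 : n - γ = 0 := by omega
            simp only [hw, ht, h0]
            simp
        linear_combination hu + hv
      rw [Finset.sum_congr rfl hstep, Finset.sum_add_distrib, ih, Finset.sum_range_sub w]
      have hw0 : w 0 = q ^ (2 * (m + 1 - 0) * (n - 0)) := by
        simp only [hw, ht, Nat.sub_zero, gbKQ_zero_right, pqKQ_zero, mul_one]
        rw [← pow_add]
        congr 1; ring
      have hwm : w (m + 1) = 0 := by
        simp [hw, ht, gbKQ_eq_zero q m (m + 1) (by omega)]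
      rw [hwm, hw0]
      simp [gbKQ_zero_right, pqKQ_zero, gbKQ]

lemma keyKQ (hpoch : ∀ s : ℕ, 1 ≤ s → (1 : K) - q ^ (2 * s) ≠ 0) (m n : ℕ) :
    (pqKQ q m * pqKQ q n)⁻¹ = ∑ γ ∈ Finset.range (min m n + 1),
      q ^ (2 * (m - γ) * (n - γ)) * (pqKQ q (m - γ) * pqKQ q (n - γ) * pqKQ q γ)⁻¹ := by
  have hK := KEY q hpoch m n
  have hsub : Finset.range (min m n + 1) ⊆ Finset.range (m + 1) :=
    Finset.range_subset_range.mpr (by omega)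
  rw [← Finset.sum_subset hsub (fun γ hγm hγ => ?_)] at hK
  · symm
    apply eq_inv_of_mul_eq_one_left
    rw [Finset.sum_mul, ← hK]
    apply Finset.sum_congr rfl
    intro γ hγ
    rw [Finset.mem_range] at hγ
    have h1 := gbKQ_mul q m γ (by omega)
    have h2 := gbKQ_mul q n γ (by omega)
    rw [← h1, ← h2]
    have ne1 := pqKQ_ne_zero q hpoch (m - γ)
    have ne2 := pqKQ_ne_zero q hpoch (n - γ)
    have ne3 := pqKQ_ne_zero q hpoch γ
    field_simp
  · rw [Finset.mem_range] at hγm hγ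
    have : n < γ := by omega
    rw [gbKQ_eq_zero q n γ this]
    ring

variable {ι : Type*} [Fintype ι] [DecidableEq ι]

/-- The shifted dimension vector. -/
def shiftKQ (x y : ι) (e : ι → ℕ) (γ : ℕ) : ι → ℕ :=
  fun i => e i + (if i = x then γ else 0) + (if i = y then γ else 0)

/-- The quadratic form of a quiver. -/
def QfKQ (M : ι → ι → ℤ) (v : ι → ℕ) : ℤ := ∑ i, ∑ j, M i j * (v i : ℤ) * (v j : ℤ)

lemma sum_split (x y : ι) (hxy : x ≠ y) (v : ι → ℕ) :
    ∑ i, v i = v x + (v y + ∑ i ∈ (Finset.univ.erase x).erase y, v i) := by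
  rw [← Finset.add_sum_erase Finset.univ v (Finset.mem_univ x),
      ← Finset.add_sum_erase _ v (Finset.mem_erase.mpr ⟨Ne.symm hxy, Finset.mem_univ y⟩)]

lemma linkKQ (hq : q ≠ 0) (hpoch : ∀ s : ℕ, 1 ≤ s → (1 : K) - q ^ (2 * s) ≠ 0)
    (M : ι → ι → ℤ) (x y : ι) (hxy : x ≠ y) (lam : ι → K) (N : ℕ) :
    ∑ dv ∈ (Fintype.piFinset fun _ : ι => Finset.range (N + 1)).filter
        (fun dv => ∑ i, dv i = N),
      (-q) ^ (∑ i, ∑ j, M i j * (dv i : ℤ) * (dv j : ℤ)) *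
        ∏ i, (lam i ^ dv i / ∏ s ∈ Finset.range (dv i), (1 - q ^ (2 * (s + 1)))) =
    ∑ p ∈ ((Fintype.piFinset fun _ : ι => Finset.range (N + 1)) ×ˢ Finset.range (N + 1)).filter
        (fun p => (∑ i, p.1 i) + 2 * p.2 = N),
      (-q) ^ (QfKQ M (shiftKQ x y p.1 p.2) + 2 * (p.1 x : ℤ) * (p.1 y : ℤ)) *
        (((lam x * lam y) ^ p.2 / pqKQ q p.2) *
          ∏ i, (lam i ^ p.1 i / pqKQ q (p.1 i))) := by
  classical
  have hy' : y ∈ Finset.univ.erase x :=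
    Finset.mem_erase.mpr ⟨Ne.symm hxy, Finset.mem_univ y⟩
  -- Step 1 : split each summand using the key identity
  have hsplit : ∀ dv : ι → ℕ,
      (-q) ^ (∑ i, ∑ j, M i j * (dv i : ℤ) * (dv j : ℤ)) *
        ∏ i, (lam i ^ dv i / ∏ s ∈ Finset.range (dv i), (1 - q ^ (2 * (s + 1)))) =
      ∑ γ ∈ Finset.range (min (dv x) (dv y) + 1),
        (-q) ^ (QfKQ M dv) *
          ((lam x ^ dv x * lam y ^ dv y) *
            (q ^ (2 * (dv x - γ) * (dv y - γ)) *
              (pqKQ q (dv x - γ) * pqKQ q (dv y - γ) * pqKQ q γ)⁻¹) *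
          ∏ i ∈ (Finset.univ.erase x).erase y, (lam i ^ dv i / pqKQ q (dv i))) := by
    intro dv
    show (-q) ^ (QfKQ M dv) * ∏ i, (lam i ^ dv i / pqKQ q (dv i)) = _
    rw [← Finset.mul_prod_erase Finset.univ _ (Finset.mem_univ x),
        ← Finset.mul_prod_erase _ _ hy']
    have hre : lam x ^ dv x / pqKQ q (dv x) * (lam y ^ dv y / pqKQ q (dv y) *
        ∏ i ∈ (Finset.univ.erase x).erase y, (lam i ^ dv i / pqKQ q (dv i)))
        = (lam x ^ dv x * lam y ^ dv y) * (pqKQ q (dv x) * pqKQ q (dv y))⁻¹ *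
          ∏ i ∈ (Finset.univ.erase x).erase y, (lam i ^ dv i / pqKQ q (dv i)) := by
      rw [div_eq_mul_inv, div_eq_mul_inv, mul_inv]
      ring
    rw [hre, keyKQ q hpoch (dv x) (dv y), Finset.mul_sum, Finset.sum_mul, Finset.mul_sum]
  rw [Finset.sum_congr rfl (fun dv _ => hsplit dv), Finset.sum_sigma']
  -- Step 2 : reindex
  refine Finset.sum_nbij'
    (i := fun p => (fun i => p.1 i - (if i = x then p.2 else 0) - (if i = y then p.2 else 0), p.2))
    (j := fun p => ⟨shiftKQ x y p.1 p.2, p.2⟩) ?_ ?_ ?_ ?_ ?_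
  · -- membership forward
    rintro ⟨dv, γ⟩ hp
    simp only [Finset.mem_sigma, Finset.mem_filter, Fintype.mem_piFinset,
      Finset.mem_range] at hp
    obtain ⟨⟨hpi, hsum⟩, hγ⟩ := hp
    have hγx : γ ≤ dv x := by omega
    have hγy : γ ≤ dv y := by omega
    have hxx : (if x = x then γ else 0) = γ := by simp
    have hxy0 : (if x = y then γ else 0) = 0 := by simp [hxy]
    have hyx0 : (if y = x then γ else 0) = 0 := by simp [Ne.symm hxy]
    have hyy : (if y = y then γ else 0) = γ := by simp
    simp only [Finset.mem_filter, Finset.mem_product, Fintype.mem_piFinset, Finset.mem_range]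
    refine ⟨⟨fun i => ?_, ?_⟩, ?_⟩
    · have := hpi i; omega
    · have := hpi x; omega
    · -- sum condition
      have hpoint : ∀ i ∈ Finset.univ, dv i =
          (dv i - (if i = x then γ else 0) - (if i = y then γ else 0)) +
            ((if i = x then γ else 0) + (if i = y then γ else 0)) := by
        intro i _
        by_cases h1 : i = x
        · subst h1; simp [hxy]; omega
        · by_cases h2 : i = y
          · subst h2; simp [h1]; omega
          · simp [h1, h2]
      have hsum2 := (Finset.sum_congr rfl hpoint).symm
      rw [Finset.sum_add_distrib, Finset.sum_add_distrib,
        Finset.sum_ite_eq' Finset.univ x (fun _ => γ),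
        Finset.sum_ite_eq' Finset.univ y (fun _ => γ)] at hsum2
      simp only [Finset.mem_univ, if_true] at hsum2
      have h3 : Finset.univ.sum dv = ∑ i, dv i := rfl
      omega
  · -- membership backward
    rintro ⟨e, γ⟩ hp
    simp only [Finset.mem_filter, Finset.mem_product, Fintype.mem_piFinset,
      Finset.mem_range] at hp
    obtain ⟨⟨hpi, hγ⟩, hsum⟩ := hp
    have hxx : (if x = x then γ else 0) = γ := by simp
    have hxy0 : (if x = y then γ else 0) = 0 := by simp [hxy]
    have hyx0 : (if y = x then γ else 0) = 0 := by simp [Ne.symm hxy]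
    have hyy : (if y = y then γ else 0) = γ := by simp
    have hsplitsum : ∑ i, shiftKQ x y e γ i = (∑ i, e i) + 2 * γ := by
      have hpoint : ∀ i ∈ Finset.univ, shiftKQ x y e γ i =
          e i + ((if i = x then γ else 0) + (if i = y then γ else 0)) := by
        intro i _
        simp [shiftKQ, add_assoc]
      rw [Finset.sum_congr rfl hpoint, Finset.sum_add_distrib, Finset.sum_add_distrib,
        Finset.sum_ite_eq' Finset.univ x (fun _ => γ),
        Finset.sum_ite_eq' Finset.univ y (fun _ => γ)]
      simp only [Finset.mem_univ, if_true]
      omega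
    simp only [Finset.mem_sigma, Finset.mem_filter, Fintype.mem_piFinset, Finset.mem_range]
    refine ⟨⟨fun i => ?_, ?_⟩, ?_⟩
    · have hi : shiftKQ x y e γ i ≤ ∑ j, shiftKQ x y e γ j :=
        Finset.single_le_sum (fun i _ => Nat.zero_le _) (Finset.mem_univ i)
      omega
    · omega
    · have h1 : shiftKQ x y e γ x = e x + γ := by
        simp [shiftKQ, hxy, Ne.symm hxy]
      have h2 : shiftKQ x y e γ y = e y + γ := by
        simp [shiftKQ, hxy, Ne.symm hxy]
      omega
  · -- left inverse
    rintro ⟨dv, γ⟩ hp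
    simp only [Finset.mem_sigma, Finset.mem_filter, Fintype.mem_piFinset,
      Finset.mem_range] at hp
    obtain ⟨⟨hpi, hsum⟩, hγ⟩ := hp
    have hγx : γ ≤ dv x := by omega
    have hγy : γ ≤ dv y := by omega
    refine Sigma.ext ?_ (heq_of_eq rfl)
    funext i
    simp only [shiftKQ]
    by_cases h1 : i = x
    · subst h1; simp [if_neg hxy]; omega
    · by_cases h2 : i = y
      · subst h2; simp [if_neg (Ne.symm hxy), h1]; omega
      · simp [h1, h2]
  · -- right inverse
    rintro ⟨e, γ⟩ _
    refine Prod.ext ?_ rfl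
    funext i
    simp only [shiftKQ]
    by_cases h1 : i = x
    · subst h1; simp [if_neg hxy]
    · by_cases h2 : i = y
      · subst h2; simp [if_neg (Ne.symm hxy), h1]
      · simp [h1, h2]
  · -- value equality
    rintro ⟨dv, γ⟩ hp
    simp only [Finset.mem_sigma, Finset.mem_filter, Fintype.mem_piFinset,
      Finset.mem_range] at hp
    obtain ⟨⟨hpi, hsum⟩, hγ⟩ := hp
    have hγx : γ ≤ dv x := by omega
    have hγy : γ ≤ dv y := by omega
    dsimp only
    set e : ι → ℕ := fun i => dv i - (if i = x then γ else 0) - (if i = y then γ else 0)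
      with hedef
    have hex : e x = dv x - γ := by simp [hedef, if_neg hxy]
    have hey : e y = dv y - γ := by simp [hedef, if_neg (Ne.symm hxy)]
    have hshift : shiftKQ x y e γ = dv := by
      funext i
      simp only [shiftKQ, hedef]
      by_cases h1 : i = x
      · subst h1; simp [if_neg hxy]; omega
      · by_cases h2 : i = y
        · subst h2; simp [if_neg (Ne.symm hxy), h1]; omega
        · simp [h1, h2]
    have hexp : (-q) ^ (QfKQ M (shiftKQ x y e γ) + 2 * (e x : ℤ) * (e y : ℤ))
        = (-q) ^ (QfKQ M dv) * q ^ (2 * (dv x - γ) * (dv y - γ)) := by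
      rw [hshift, zpow_add₀ (neg_ne_zero.mpr hq)]
      congr 1
      have hcast : 2 * (e x : ℤ) * (e y : ℤ) = ((2 * (dv x - γ) * (dv y - γ) : ℕ) : ℤ) := by
        rw [hex, hey]; push_cast [hγx, hγy]; ring
      rw [hcast, zpow_natCast, mul_assoc, pow_mul, pow_mul, neg_sq, ← pow_mul, ← pow_mul]
    have hpowx : lam x ^ dv x = lam x ^ e x * lam x ^ γ := by
      rw [← pow_add, hex]; congr 1; omega
    have hpowy : lam y ^ dv y = lam y ^ e y * lam y ^ γ := by
      rw [← pow_add, hey]; congr 1; omega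
    have hprod : ∏ i ∈ (Finset.univ.erase x).erase y, (lam i ^ dv i / pqKQ q (dv i))
        = ∏ i ∈ (Finset.univ.erase x).erase y, (lam i ^ e i / pqKQ q (e i)) := by
      apply Finset.prod_congr rfl
      intro i hi
      rw [Finset.mem_erase, Finset.mem_erase] at hi
      simp [hedef, hi.1, hi.2.1]
    rw [hexp, hpowx, hpowy, hprod, ← Finset.mul_prod_erase Finset.univ
        (fun i => lam i ^ e i / pqKQ q (e i)) (Finset.mem_univ x),
        ← Finset.mul_prod_erase _ _ hy']
    rw [hex, hey, mul_pow]
    simp only [div_eq_mul_inv, mul_inv]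
    ring

lemma Qf_shift (M : ι → ι → ℤ) (x y : ι) (hxy : x ≠ y) (e : ι → ℕ) (γ : ℕ) :
    QfKQ M (shiftKQ x y e γ) = QfKQ M e
      + (γ : ℤ) * (∑ i, (M x i + M i x + M y i + M i y) * (e i : ℤ))
      + (γ : ℤ) ^ 2 * (M x x + M x y + M y x + M y y) := by
  have hc : ∀ i, ((shiftKQ x y e γ i : ℕ) : ℤ)
      = (e i : ℤ) + ((if i = x then (γ : ℤ) else 0) + (if i = y then (γ : ℤ) else 0)) := by
    intro i; simp only [shiftKQ]; split_ifs <;> push_cast <;> ring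
  unfold QfKQ
  have hexp : ∀ i ∈ Finset.univ, ∀ j ∈ Finset.univ,
      M i j * ((shiftKQ x y e γ i : ℕ) : ℤ) * ((shiftKQ x y e γ j : ℕ) : ℤ)
      = M i j * (e i : ℤ) * (e j : ℤ)
        + (M i j * (e i : ℤ)) * ((if j = x then (γ : ℤ) else 0) + (if j = y then (γ : ℤ) else 0))
        + ((if i = x then (γ : ℤ) else 0) + (if i = y then (γ : ℤ) else 0)) * (M i j * (e j : ℤ))
        + ((if i = x then (γ : ℤ) else 0) + (if i = y then (γ : ℤ) else 0)) *
            ((if j = x then (γ : ℤ) else 0) + (if j = y then (γ : ℤ) else 0)) * M i j := by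
    intro i _ j _
    rw [hc i, hc j]; ring
  rw [Finset.sum_congr rfl (fun i hi => Finset.sum_congr rfl (hexp i hi))]
  simp only [Finset.sum_add_distrib, mul_add, add_mul, ite_mul, mul_ite, zero_mul, mul_zero,
    zero_add, add_zero, Finset.sum_ite_eq, Finset.sum_ite_eq', Finset.mem_univ, if_true,
    Finset.mul_sum, Finset.sum_mul, if_neg hxy, if_neg (Ne.symm hxy)]
  have hpullx : ∀ i, (∑ j, if i = x then (γ : ℤ) * (M i j * (e j : ℤ)) else 0)
      = if i = x then (∑ j, (γ : ℤ) * (M i j * (e j : ℤ))) else 0 := by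
    intro i; split_ifs <;> simp
  have hpully : ∀ i, (∑ j, if i = y then (γ : ℤ) * (M i j * (e j : ℤ)) else 0)
      = if i = y then (∑ j, (γ : ℤ) * (M i j * (e j : ℤ))) else 0 := by
    intro i; split_ifs <;> simp
  rw [Finset.sum_congr rfl (fun i _ => hpullx i),
      Finset.sum_congr rfl (fun i _ => hpully i),
      Finset.sum_ite_eq' Finset.univ x (fun i => ∑ j, (γ : ℤ) * (M i j * (e j : ℤ))),
      Finset.sum_ite_eq' Finset.univ y (fun i => ∑ j, (γ : ℤ) * (M i j * (e j : ℤ)))]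
  simp only [Finset.mem_univ, if_true]
  rw [Finset.sum_congr rfl (fun i (_ : i ∈ Finset.univ) =>
        show M i x * (e i : ℤ) * (γ : ℤ) = (γ : ℤ) * (M i x * (e i : ℤ)) by ring),
      Finset.sum_congr rfl (fun i (_ : i ∈ Finset.univ) =>
        show M i y * (e i : ℤ) * (γ : ℤ) = (γ : ℤ) * (M i y * (e i : ℤ)) by ring)]
  ring

lemma hind_sum (e : ι → ℕ) (u v : ι) :
    ∑ i, ∑ j, ((if i = u then (1 : ℤ) else 0) * (if j = v then 1 else 0)) *
      ((e i : ℤ) * (e j : ℤ)) = (e u : ℤ) * (e v : ℤ) := by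
  have hin : ∀ i, (∑ j, ((if i = u then (1 : ℤ) else 0) * (if j = v then 1 else 0)) *
      ((e i : ℤ) * (e j : ℤ))) = (if i = u then ((e i : ℤ) * (e v : ℤ)) else 0) := by
    intro i
    rw [Finset.sum_congr rfl (fun j (_ : j ∈ Finset.univ) =>
      show ((if i = u then (1 : ℤ) else 0) * (if j = v then 1 else 0)) *
          ((e i : ℤ) * (e j : ℤ))
        = (if j = v then ((if i = u then (1 : ℤ) else 0) * ((e i : ℤ) * (e j : ℤ))) else 0)
        from by split_ifs <;> ring)]
    rw [Finset.sum_ite_eq' Finset.univ v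
      (fun j => (if i = u then (1 : ℤ) else 0) * ((e i : ℤ) * (e j : ℤ)))]
    simp only [Finset.mem_univ, if_true]
    split_ifs <;> ring
  rw [Finset.sum_congr rfl (fun i (_ : i ∈ Finset.univ) => hin i),
      Finset.sum_ite_eq' Finset.univ u (fun i => (e i : ℤ) * (e v : ℤ))]
  simp

end KQ


/-- Local equivalence theorem of the knots-quivers correspondence: if `C'` is obtained
from the symmetric matrix `C` by exchanging `C_{ab} ↔ C_{cd}` where `C_{cd} = C_{ab}+1`,
the linear spectator conditions hold, and `λ_a λ_b = λ_c λ_d`, then for every `N` the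
degree-`N` parts of the specialized motivic generating series coincide. -/
theorem stmt_7 {ι : Type*} [Fintype ι] [DecidableEq ι] {K : Type*} [Field K]
    (q : K) (hq : q ≠ 0)
    (hpoch : ∀ s : ℕ, 1 ≤ s → (1 : K) - q ^ (2 * s) ≠ 0)
    (C C' : ι → ι → ℤ) (a b c d : ι)
    (hab : a ≠ b) (hac : a ≠ c) (had : a ≠ d) (hbc : b ≠ c) (hbd : b ≠ d) (hcd : c ≠ d)
    (hCsymm : ∀ i j, C i j = C j i) (hC'symm : ∀ i j, C' i j = C' j i)
    (h1 : C c d = C a b + 1)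
    (h2 : ∀ i, C a i + C b i =
      C c i + C d i - (if c = i then 1 else 0) - (if d = i then 1 else 0))
    (hC'ab : C' a b = C c d) (hC'cd : C' c d = C a b)
    (hC'other : ∀ i j,
      ¬((i = a ∧ j = b) ∨ (i = b ∧ j = a) ∨ (i = c ∧ j = d) ∨ (i = d ∧ j = c)) →
      C' i j = C i j)
    (lam : ι → K) (hlam : lam a * lam b = lam c * lam d) (N : ℕ) :
    ∑ dv ∈ (Fintype.piFinset fun _ : ι => Finset.range (N + 1)).filter
        (fun dv => ∑ i, dv i = N),
      (-q) ^ (∑ i, ∑ j, C i j * (dv i : ℤ) * (dv j : ℤ)) *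
        ∏ i, (lam i ^ dv i / ∏ s ∈ Finset.range (dv i), (1 - q ^ (2 * (s + 1)))) =
    ∑ dv ∈ (Fintype.piFinset fun _ : ι => Finset.range (N + 1)).filter
        (fun dv => ∑ i, dv i = N),
      (-q) ^ (∑ i, ∑ j, C' i j * (dv i : ℤ) * (dv j : ℤ)) *
        ∏ i, (lam i ^ dv i / ∏ s ∈ Finset.range (dv i), (1 - q ^ (2 * (s + 1)))) := by
  classical
  -- matrix difference decomposition
  have hdiff : ∀ i j, C' i j = C i j
      + (if i = a then (1 : ℤ) else 0) * (if j = b then 1 else 0)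
      + (if i = b then (1 : ℤ) else 0) * (if j = a then 1 else 0)
      - (if i = c then (1 : ℤ) else 0) * (if j = d then 1 else 0)
      - (if i = d then (1 : ℤ) else 0) * (if j = c then 1 else 0) := by
    intro i j
    by_cases h1' : i = a ∧ j = b
    · rw [h1'.1, h1'.2, hC'ab, h1]
      rw [if_pos rfl, if_pos rfl, if_neg hab, if_neg (Ne.symm hab),
          if_neg hac, if_neg hbd, if_neg had, if_neg hbc]
      ring
    · by_cases h2' : i = b ∧ j = a
      · rw [h2'.1, h2'.2, hC'symm b a, hC'ab, h1, hCsymm b a]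
        rw [if_neg (Ne.symm hab), if_neg hab, if_pos rfl, if_pos rfl,
            if_neg hbc, if_neg had, if_neg hbd, if_neg hac]
        ring
      · by_cases h3' : i = c ∧ j = d
        · rw [h3'.1, h3'.2, hC'cd]
          rw [if_neg (Ne.symm hac), if_neg (Ne.symm hbd), if_neg (Ne.symm hbc),
              if_neg (Ne.symm had), if_pos rfl, if_pos rfl, if_neg hcd, if_neg (Ne.symm hcd)]
          omega
        · by_cases h4' : i = d ∧ j = c
          · rw [h4'.1, h4'.2, hC'symm d c, hC'cd, hCsymm d c]
            rw [if_neg (Ne.symm had), if_neg (Ne.symm hbc), if_neg (Ne.symm hbd),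
                if_neg (Ne.symm hac), if_neg (Ne.symm hcd), if_neg hcd, if_pos rfl, if_pos rfl]
            omega
          · rw [hC'other i j (by tauto)]
            have P1 : (if i = a then (1 : ℤ) else 0) * (if j = b then 1 else 0) = 0 := by
              by_cases e1 : i = a
              · by_cases e2 : j = b
                · exact absurd ⟨e1, e2⟩ h1'
                · rw [if_neg e2, mul_zero]
              · rw [if_neg e1, zero_mul]
            have P2 : (if i = b then (1 : ℤ) else 0) * (if j = a then 1 else 0) = 0 := by
              by_cases e1 : i = b
              · by_cases e2 : j = a
                · exact absurd ⟨e1, e2⟩ h2'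
                · rw [if_neg e2, mul_zero]
              · rw [if_neg e1, zero_mul]
            have P3 : (if i = c then (1 : ℤ) else 0) * (if j = d then 1 else 0) = 0 := by
              by_cases e1 : i = c
              · by_cases e2 : j = d
                · exact absurd ⟨e1, e2⟩ h3'
                · rw [if_neg e2, mul_zero]
              · rw [if_neg e1, zero_mul]
            have P4 : (if i = d then (1 : ℤ) else 0) * (if j = c then 1 else 0) = 0 := by
              by_cases e1 : i = d
              · by_cases e2 : j = c
                · exact absurd ⟨e1, e2⟩ h4'
                · rw [if_neg e2, mul_zero]
              · rw [if_neg e1, zero_mul]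
            rw [P1, P2, P3, P4]
            ring
  -- quadratic form difference
  have hQd : ∀ e : ι → ℕ, QfKQ C' e = QfKQ C e
      + 2 * (e a : ℤ) * (e b : ℤ) - 2 * (e c : ℤ) * (e d : ℤ) := by
    intro e
    have hsummand : ∀ i ∈ Finset.univ, ∀ j ∈ Finset.univ,
        C' i j * ((e i : ℕ) : ℤ) * ((e j : ℕ) : ℤ)
        = C i j * (e i : ℤ) * (e j : ℤ)
          + ((if i = a then (1 : ℤ) else 0) * (if j = b then 1 else 0)) * ((e i : ℤ) * (e j : ℤ))
          + ((if i = b then (1 : ℤ) else 0) * (if j = a then 1 else 0)) * ((e i : ℤ) * (e j : ℤ))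
          - ((if i = c then (1 : ℤ) else 0) * (if j = d then 1 else 0)) * ((e i : ℤ) * (e j : ℤ))
          - ((if i = d then (1 : ℤ) else 0) * (if j = c then 1 else 0)) * ((e i : ℤ) * (e j : ℤ)) := by
      intro i _ j _; rw [hdiff i j]; ring
    show (∑ i, ∑ j, C' i j * (e i : ℤ) * (e j : ℤ)) = _
    rw [Finset.sum_congr rfl (fun i hi => Finset.sum_congr rfl (hsummand i hi))]
    simp only [Finset.sum_add_distrib, Finset.sum_sub_distrib]
    rw [hind_sum e a b, hind_sum e b a, hind_sum e c d, hind_sum e d c]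
    show _ = (∑ i, ∑ j, C i j * (e i : ℤ) * (e j : ℤ)) + _ - _
    ring
  -- reversed-if helper
  have hifrev : ∀ u v : ι, (if u = v then (1 : ℤ) else 0) = (if v = u then 1 else 0) := by
    intro u v
    by_cases h : u = v
    · rw [if_pos h, if_pos h.symm]
    · rw [if_neg h, if_neg (fun hh : v = u => h hh.symm)]
  -- linear comparison
  have hL : ∀ i, C a i + C i a + C b i + C i b = C' c i + C' i c + C' d i + C' i d := by
    intro i
    have h2i := h2 i
    rw [hifrev c i, hifrev d i] at h2i
    have e1 := hdiff c i
    rw [if_neg (Ne.symm hac), if_neg (Ne.symm hbc), if_pos rfl, if_neg hcd,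
        zero_mul, zero_mul, one_mul, zero_mul, add_zero, add_zero, sub_zero] at e1
    have e2 := hdiff i c
    rw [if_neg (Ne.symm hbc), if_neg (Ne.symm hac), if_neg hcd, if_pos rfl,
        mul_zero, mul_zero, mul_zero, mul_one, add_zero, add_zero, sub_zero] at e2
    have e3 := hdiff d i
    rw [if_neg (Ne.symm had), if_neg (Ne.symm hbd), if_neg (Ne.symm hcd), if_pos rfl,
        zero_mul, zero_mul, zero_mul, one_mul, add_zero, add_zero, sub_zero] at e3
    have e4 := hdiff i d
    rw [if_neg (Ne.symm hbd), if_neg (Ne.symm had), if_neg (Ne.symm hcd), if_pos rfl,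
        mul_zero, mul_zero, mul_zero, mul_one, add_zero, add_zero, sub_zero] at e4
    rw [e1, e2, e3, e4]
    have sa := hCsymm a i
    have sb := hCsymm b i
    have sc := hCsymm c i
    have sd := hCsymm d i
    split_ifs at h2i ⊢ with hic hid
    all_goals omega
  -- quadratic comparison
  have hS : C' c c + C' c d + C' d c + C' d d = C a a + C a b + C b a + C b b := by
    rw [hC'symm d c,
        hC'other c c (by rintro (⟨h,h'⟩|⟨h,h'⟩|⟨h,h'⟩|⟨h,h'⟩) <;>
          first | exact hac h.symm | exact hbc h.symm | exact hcd h' | exact hcd h),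
        hC'other d d (by rintro (⟨h,h'⟩|⟨h,h'⟩|⟨h,h'⟩|⟨h,h'⟩) <;>
          first | exact had h.symm | exact hbd h.symm | exact hcd h.symm | exact hcd h'.symm),
        hC'cd]
    have h2a := h2 a
    rw [if_neg (fun h : c = a => hac h.symm), if_neg (fun h : d = a => had h.symm)] at h2a
    have h2b := h2 b
    rw [if_neg (fun h : c = b => hbc h.symm), if_neg (fun h : d = b => hbd h.symm)] at h2b
    have h2c := h2 c
    rw [if_pos rfl, if_neg (fun h : d = c => hcd h.symm)] at h2c
    have h2d := h2 d
    rw [if_neg hcd, if_pos rfl] at h2d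
    have s1 := hCsymm a b
    have s2 := hCsymm a c
    have s3 := hCsymm a d
    have s4 := hCsymm b c
    have s5 := hCsymm b d
    have s6 := hCsymm c d
    omega
  -- assemble
  rw [linkKQ q hq hpoch C a b hab lam N, linkKQ q hq hpoch C' c d hcd lam N]
  apply Finset.sum_congr rfl
  intro p hp
  have hLsum : (∑ i, (C a i + C i a + C b i + C i b) * ((p.1 i : ℕ) : ℤ))
      = ∑ i, (C' c i + C' i c + C' d i + C' i d) * ((p.1 i : ℕ) : ℤ) :=
    Finset.sum_congr rfl (fun i _ => by rw [hL i])
  have hEXP : QfKQ C (shiftKQ a b p.1 p.2) + 2 * (p.1 a : ℤ) * (p.1 b : ℤ)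
      = QfKQ C' (shiftKQ c d p.1 p.2) + 2 * (p.1 c : ℤ) * (p.1 d : ℤ) := by
    rw [Qf_shift C a b hab p.1 p.2, Qf_shift C' c d hcd p.1 p.2, hQd p.1, ← hLsum]
    have hS' : C' c c + C' c d + C' d c + C' d d
        = C a a + C a b + C b a + C b b := hS
    rw [hS']
    ring
  rw [hEXP, hlam]
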